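/- Let H be a partial building set in a geometric lattice L, and let S ⊆ H be an antichain with at least two elements. If S is H-nested, then the meet of S equals ⊥. -/

import Mathlib

/-- A finite lattice is geometric if it is atomistic and (upper) semimodular. -/
def IsGeomLat (L : Type) [Lattice L] [BoundedOrder L] [Fintype L] : Prop :=
  (∀ x : L, IsLUB {a : L | IsAtom a ∧ a ≤ x} x) ∧
  ∀ a b : L, a ⊓ b ⋖ a → b ⋖ a ⊔ b

/-- The set of factors `F(L,G;x) = max G_{≤x}` of an element `x` with respect to
a subset `G ⊆ L`. -/
def factorsOf {L : Type} [Lattice L] [BoundedOrder L] (G : Set L) (x : L) : Set L :=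
  {g | g ∈ G ∧ g ≤ x ∧ ∀ h ∈ G, h ≤ x → g ≤ h → g = h}

/-- A combinatorial building set in a (geometric) lattice `L`: a set `G` of
elements `> ⊥` such that for each `x > ⊥`, the join map from the product of the
lower intervals `[⊥, g]`, `g ∈ max G_{≤x}`, to `[⊥, x]` is a poset isomorphism
sending the `g`-th "unit vector" to `g`. -/
def IsBuildingSet (L : Type) [Lattice L] [BoundedOrder L] [Fintype L] [DecidableEq L]
    (G : Set L) : Prop :=
  (∀ g ∈ G, ⊥ < g) ∧
  ∀ x : L, ⊥ < x →
    ∃ φ : ((g : factorsOf G x) → ↥(Set.Iic (g : L))) ≃o ↥(Set.Iic x),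
      ∀ g : factorsOf G x,
        φ (fun h => if hh : h = g then ⟨(g : L), by simp [hh]⟩ else ⟨⊥, bot_le⟩) =
          ⟨(g : L), g.2.2.1⟩

/-- A partial building set `H` inside a building set `G`: `H ⊆ G`, `H` contains
all atoms, and the non-atomic part of `H` is an order filter of `G`. -/
def IsPartialBuilding (L : Type) [Lattice L] [BoundedOrder L] [Fintype L] [DecidableEq L]
    (G H : Set L) : Prop :=
  H ⊆ G ∧ {a : L | IsAtom a} ⊆ H ∧
  ∀ g ∈ H, ¬ IsAtom g → ∀ h ∈ G, g ≤ h → h ∈ H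

/-- `N` is `H`-nested: every antichain in `N` with at least two elements has its
join (computed in `L`) outside of `H`. -/
def IsNestedIn (L : Type) [Lattice L] [OrderBot L] (H : Set L) (N : Set L) : Prop :=
  ∀ S : Finset L, ↑S ⊆ N → 2 ≤ S.card → IsAntichain (· ≤ ·) (S : Set L) →
    S.sup id ∉ H

lemma exists_factor_le' {L : Type} [Lattice L] [BoundedOrder L] [Fintype L]
    (G : Set L) {q y : L} (hq : q ∈ G) (hqy : q ≤ y) :
    ∃ g ∈ factorsOf G y, q ≤ g := by
  classical
  set s : Finset L := Finset.univ.filter (fun h => h ∈ G ∧ h ≤ y ∧ q ≤ h) with hs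
  have hsne : s.Nonempty := ⟨q, by simp [hs, hq, hqy]⟩
  obtain ⟨m, hm, hmax⟩ := s.exists_maximal hsne
  simp only [hs, Finset.mem_filter, Finset.mem_univ, true_and] at hm
  refine ⟨m, ⟨hm.1, hm.2.1, ?_⟩, hm.2.2⟩
  intro h hhG hhy hmh
  by_contra hne
  exact hne (le_antisymm hmh (hmax (by simp [hs, hhG, hhy, le_trans hm.2.2 hmh]) hmh))


/-- if `S ⊆ H` is an antichain with at least two elements which is
`H`-nested, then the meet of `S` is `⊥`. -/
theorem nested_antichain_meet_bot {L : Type} [Lattice L] [BoundedOrder L] [Fintype L]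
    [DecidableEq L] (hgeo : IsGeomLat L) (G : Set L) (hG : IsBuildingSet L G)
    (htop : ⊤ ∈ G) (H : Set L) (hH : IsPartialBuilding L G H)
    (S : Finset L) (hSH : ↑S ⊆ H) (hcard : 2 ≤ S.card)
    (hanti : IsAntichain (· ≤ ·) (S : Set L))
    (hnest : IsNestedIn L H ↑S) :
    S.inf id = ⊥ := by
  classical
  by_contra hm
  -- get an atom below the meet
  obtain ⟨a, ha, ham⟩ : ∃ a : L, IsAtom a ∧ a ≤ S.inf id := by
    by_contra h
    push_neg at h
    have hlub := hgeo.1 (S.inf id)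
    have hempty : {a : L | IsAtom a ∧ a ≤ S.inf id} = ∅ := by
      ext x; simp only [Set.mem_setOf_eq, Set.mem_empty_iff_false, iff_false, not_and]
      exact fun hx => fun hle => (h x hx hle)
    rw [hempty] at hlub
    exact hm (le_antisymm (hlub.2 (by intro x hx; exact absurd hx (Set.notMem_empty x))) bot_le)
  -- not all elements of S are atoms
  obtain ⟨q0, hq0S, hq0na⟩ : ∃ q ∈ S, ¬ IsAtom q := by
    by_contra h
    push_neg at h
    have hsub : S ⊆ {a} := by
      intro q hq
      have haq : a = q :=
        (((h q hq).le_iff).mp (le_trans ham (Finset.inf_le hq))).resolve_left ha.1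
      simp [← haq]
    have := Finset.card_le_card hsub
    simp at this
    omega
  set y : L := S.sup id with hy
  have hyH : y ∉ H := hnest S subset_rfl hcard hanti
  have hq0H : q0 ∈ H := hSH hq0S
  have hq0G : q0 ∈ G := hH.1 hq0H
  have hq0y : q0 ≤ y := Finset.le_sup (f := id) hq0S
  have hybot : ⊥ < y := lt_of_lt_of_le (hG.1 q0 hq0G) hq0y
  obtain ⟨φ, hφ⟩ := hG.2 y hybot
  -- distinct factors meet to ⊥
  have hdis : ∀ g1 g2 : factorsOf G y, g1 ≠ g2 → (g1 : L) ⊓ (g2 : L) = ⊥ := by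
    intro g1 g2 h12
    have hmeet :
        ((fun h => if hh : h = g1 then (⟨(g1 : L), by simp [hh]⟩ : ↥(Set.Iic (h : L)))
            else ⟨⊥, bot_le⟩) ⊓
         (fun h => if hh : h = g2 then (⟨(g2 : L), by simp [hh]⟩ : ↥(Set.Iic (h : L)))
            else ⟨⊥, bot_le⟩) :
          (h : factorsOf G y) → ↥(Set.Iic (h : L))) = ⊥ := by
      funext h
      by_cases hh1 : h = g1
      · have hh2 : ¬ h = g2 := by rw [hh1]; exact h12
        simp [Pi.inf_apply, hh2]
        exact le_bot_iff.mp inf_le_right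
      · simp [Pi.inf_apply, hh1]
        exact le_bot_iff.mp inf_le_left
    have hkey : (⟨(g1 : L), g1.2.2.1⟩ : ↥(Set.Iic y)) ⊓ ⟨(g2 : L), g2.2.2.1⟩ = ⊥ := by
      rw [← hφ g1, ← hφ g2, ← OrderIso.map_inf, hmeet, OrderIso.map_bot]
    have := congrArg (Subtype.val) hkey
    exact this
  -- all elements of S lie below one common factor
  obtain ⟨g, hgF, hq0g⟩ := exists_factor_le' G hq0G hq0y
  have hall : ∀ q ∈ S, q ≤ g := by
    intro q hqS
    have hqG : q ∈ G := hH.1 (hSH hqS)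
    obtain ⟨g', hg'F, hqg'⟩ := exists_factor_le' G hqG (Finset.le_sup (f := id) hqS)
    by_cases hgg : (⟨g, hgF⟩ : factorsOf G y) = ⟨g', hg'F⟩
    · have : g = g' := congrArg Subtype.val hgg
      rw [this]; exact hqg'
    · exfalso
      have hbot := hdis ⟨g, hgF⟩ ⟨g', hg'F⟩ hgg
      have haq : a ≤ g ⊓ g' :=
        le_inf (le_trans (le_trans ham (Finset.inf_le hq0S)) hq0g)
          (le_trans (le_trans ham (Finset.inf_le hqS)) hqg')
      rw [hbot] at haq
      exact ha.1 (le_antisymm haq bot_le)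
  -- hence y = g ∈ G
  have hyg : y = g := le_antisymm (Finset.sup_le hall) hgF.2.1
  have hyG : y ∈ G := hyg ▸ hgF.1
  exact hyH (hH.2.2 q0 hq0H hq0na y hyG hq0y)
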